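/- Let X ∈ ℝ^{n×d} be full rank, d ≤ s ≤ n, and assume det(X_S^⊤X_S) > 0 for every size-s subset S (full support). If S is drawn by size-s volume sampling, then E[(X_S^⊤X_S)^{−1}] = ((n−d+1)/(s−d+1)) · (X^⊤X)^{−1} as a matrix identity. Without the full-support assumption, the equality weakens to the positive-semidefinite inequality E[(X_S^⊤X_S)^{−1}] ⪯ ((n−d+1)/(s−d+1))(X^⊤X)^{−1}. -/

import Mathlib

open Matrix Finset

noncomputable section

/-- The submatrix of `X` consisting of the rows indexed by the subset `S`. -/
def rowSub {n d : ℕ} (X : Matrix (Fin n) (Fin d) ℝ) (S : Finset (Fin n)) :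
    Matrix {i // i ∈ S} (Fin d) ℝ :=
  X.submatrix (fun i => (i : Fin n)) id

/-- `X_S^⊤ X_S`. -/
def gram {n d : ℕ} (X : Matrix (Fin n) (Fin d) ℝ) (S : Finset (Fin n)) :
    Matrix (Fin d) (Fin d) ℝ :=
  (rowSub X S)ᵀ * rowSub X S

/-- The four Penrose conditions characterizing the Moore–Penrose pseudoinverse. -/
def IsMoorePenrose {m p : Type*} [Fintype m] [Fintype p]
    (A : Matrix m p ℝ) (B : Matrix p m ℝ) : Prop :=
  A * B * A = A ∧ B * A * B = B ∧ (A * B)ᵀ = A * B ∧ (B * A)ᵀ = B * A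

/-- The Moore–Penrose pseudoinverse `A⁺` of a real matrix. -/
def pinv {m p : Type*} [Fintype m] [Fintype p] (A : Matrix m p ℝ) : Matrix p m ℝ := by
  classical exact if h : ∃ B, IsMoorePenrose A B then h.choose else 0

/-- The diagonal 0/1 selection matrix `I_S`. -/
def sel {n : ℕ} (S : Finset (Fin n)) : Matrix (Fin n) (Fin n) ℝ :=
  Matrix.diagonal (fun i => if i ∈ S then 1 else 0)

namespace VSaux
open Equiv

variable {R : Type*} [CommRing R] {N e : ℕ}

/-- Determinant of the square submatrix of `A` given by the rows in `T` (in increasing order). -/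
def rdet (A : Matrix (Fin N) (Fin e) R) (T : Finset (Fin N)) : R :=
  if h : T.card = e then
    Matrix.det (A.submatrix (fun k => ((T.orderIsoOfFin h k : Fin N))) id) else 0

private def emb (T : Finset (Fin N)) (h : T.card = e) : Fin e → Fin N :=
  fun k => (T.orderIsoOfFin h k : Fin N)

lemma emb_injective (T : Finset (Fin N)) (h : T.card = e) : Function.Injective (emb T h) := by
  intro a b hab
  have := Subtype.ext hab (p := fun x => x ∈ T) |>.symm
  exact (T.orderIsoOfFin h).injective (Subtype.ext hab)

lemma emb_mem (T : Finset (Fin N)) (h : T.card = e) (k : Fin e) : emb T h k ∈ T :=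
  (T.orderIsoOfFin h k).2

lemma rdet_of_card (A : Matrix (Fin N) (Fin e) R) (T : Finset (Fin N)) (h : T.card = e) :
    rdet A T = Matrix.det (A.submatrix (emb T h) id) := by
  rw [rdet, dif_pos h]; rfl

/-- the inner summand -/
private def F (A B : Matrix (Fin N) (Fin e) R) (p : Fin e → Fin N) : R :=
  ∑ σ : Perm (Fin e), Equiv.Perm.sign σ • ∏ i, A (p i) (σ i) * B (p i) i

private lemma F_eq (A B : Matrix (Fin N) (Fin e) R) (p : Fin e → Fin N) :
    F A B p = Matrix.det (Matrix.of fun u v => A (p v) u) * ∏ i, B (p i) i := by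
  rw [Matrix.det_apply, Finset.sum_mul, F]
  refine Finset.sum_congr rfl fun σ _ => ?_
  rw [Finset.prod_mul_distrib]
  simp only [Matrix.of_apply]
  rw [smul_mul_assoc]

private lemma F_eq_zero (A B : Matrix (Fin N) (Fin e) R) {p : Fin e → Fin N}
    (hp : ¬ Function.Injective p) : F A B p = 0 := by
  rw [F_eq]
  rw [Function.Injective] at hp
  push_neg at hp
  obtain ⟨i0, j0, hpij, hij⟩ := hp
  rw [Matrix.det_zero_of_column_eq hij (fun k => by simp [hpij]), zero_mul]

private def toPermCard (p : Fin e → Fin N) (hp : Function.Injective p) :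
    (Finset.image p Finset.univ).card = e := by
  rw [Finset.card_image_of_injective _ hp, Finset.card_univ, Fintype.card_fin]

private def toPerm (p : Fin e → Fin N) (hp : Function.Injective p) : Perm (Fin e) :=
  (Equiv.ofBijective (fun k => (⟨p k, Finset.mem_image_of_mem p (Finset.mem_univ k)⟩ :
      {x // x ∈ Finset.image p Finset.univ})) (by
    rw [Fintype.bijective_iff_injective_and_card]
    constructor
    · intro a b hab
      exact hp (congrArg Subtype.val hab)
    · rw [Fintype.card_coe, toPermCard p hp, Fintype.card_fin])).trans
    ((Finset.image p Finset.univ).orderIsoOfFin (toPermCard p hp)).toEquiv.symm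

private lemma emb_toPerm (p : Fin e → Fin N) (hp : Function.Injective p) (k : Fin e) :
    emb (Finset.image p Finset.univ) (toPermCard p hp) (toPerm p hp k) = p k :=
  congrArg Subtype.val
    (((Finset.image p Finset.univ).orderIsoOfFin (toPermCard p hp)).apply_symm_apply
      ⟨p k, Finset.mem_image_of_mem p (Finset.mem_univ k)⟩)

private lemma sum_perm (A B : Matrix (Fin N) (Fin e) R) (T : Finset (Fin N)) (hT : T.card = e) :
    ∑ σ : Perm (Fin e), F A B ((emb T hT) ∘ σ) = rdet A T * rdet B T := by
  have h1 : ∀ σ : Perm (Fin e), F A B ((emb T hT) ∘ σ)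
      = Matrix.det (A.submatrix (emb T hT) id) *
        (Equiv.Perm.sign σ • ∏ i, B ((emb T hT) (σ i)) i) := by
    intro σ
    rw [F_eq]
    have h : (Matrix.of fun u v => A (((emb T hT) ∘ σ) v) u)
        = ((A.submatrix (emb T hT) id)ᵀ).submatrix id σ := rfl
    rw [h, Matrix.det_permute', Matrix.det_transpose]
    simp only [Units.smul_def, zsmul_eq_mul, Function.comp_apply]
    push_cast
    ring
  simp only [h1]
  rw [← Finset.mul_sum]
  congr 1
  · exact (rdet_of_card A T hT).symm
  · rw [rdet_of_card B T hT, Matrix.det_apply]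
    rfl

private lemma emb_congr {T T' : Finset (Fin N)} (hTT : T = T') (h : T.card = e)
    (h' : T'.card = e) (k : Fin e) : emb T h k = emb T' h' k := by
  subst hTT; rfl

/-- Cauchy–Binet. -/
theorem cauchy_binet (A B : Matrix (Fin N) (Fin e) R) :
    Matrix.det (Aᵀ * B) =
      ∑ T ∈ Finset.powersetCard e (Finset.univ : Finset (Fin N)), rdet A T * rdet B T := by
  classical
  have step1 : Matrix.det (Aᵀ * B) = ∑ p : Fin e → Fin N, F A B p := by
    simp only [Matrix.det_apply, Matrix.mul_apply, Matrix.transpose_apply, F,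
      Finset.prod_univ_sum, Finset.smul_sum, Fintype.piFinset_univ]
    rw [Finset.sum_comm]
  rw [step1]
  have step2 : ∑ p : Fin e → Fin N, F A B p
      = ∑ p ∈ Finset.univ.filter (fun p : Fin e → Fin N => Function.Injective p), F A B p := by
    refine (Finset.sum_subset (Finset.filter_subset _ _) fun p _ hp => ?_).symm
    refine F_eq_zero A B ?_
    simpa using hp
  rw [step2]
  have step3 : ∑ p ∈ Finset.univ.filter (fun p : Fin e → Fin N => Function.Injective p), F A B p
      = ∑ x ∈ ((Finset.powersetCard e (Finset.univ : Finset (Fin N))).attach ×ˢ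
          (Finset.univ : Finset (Perm (Fin e)))),
          F A B ((emb x.1.1 (Finset.mem_powersetCard_univ.mp x.1.2)) ∘ x.2) := by
    refine Finset.sum_bij'
      (i := fun p hp => ((⟨Finset.image p Finset.univ, Finset.mem_powersetCard_univ.mpr
          (toPermCard p ((Finset.mem_filter.mp hp).2))⟩, toPerm p ((Finset.mem_filter.mp hp).2))))
      (j := fun x _ => (emb x.1.1 (Finset.mem_powersetCard_univ.mp x.1.2)) ∘ x.2)
      (fun p hp => Finset.mem_product.mpr ⟨Finset.mem_attach _ _, Finset.mem_univ _⟩)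
      (fun x hx => ?_) (fun p hp => ?_) (fun x hx => ?_) (fun p hp => ?_)
    · -- j maps into the filter
      refine Finset.mem_filter.mpr ⟨Finset.mem_univ _, ?_⟩
      exact (emb_injective _ _).comp x.2.injective
    · -- left inverse : j (i p) = p
      funext k
      exact emb_toPerm p ((Finset.mem_filter.mp hp).2) k
    · -- right inverse : i (j x) = x
      obtain ⟨⟨T, hT⟩, σ⟩ := x
      have hTc : T.card = e := Finset.mem_powersetCard_univ.mp hT
      have hq : Function.Injective ((emb T hTc) ∘ σ) := (emb_injective _ _).comp σ.injective
      have himg : Finset.image ((emb T hTc) ∘ σ) Finset.univ = T := by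
        ext a
        simp only [Finset.mem_image, Finset.mem_univ, true_and]
        constructor
        · rintro ⟨k, rfl⟩; exact emb_mem T hTc (σ k)
        · intro ha
          refine ⟨σ.symm ((T.orderIsoOfFin hTc).symm ⟨a, ha⟩), ?_⟩
          simp only [Function.comp_apply, Equiv.apply_symm_apply, emb]
          rw [OrderIso.apply_symm_apply]
      refine Prod.ext (Subtype.ext ?_) ?_
      · exact himg
      · -- toPerm (emb ∘ σ) = σ
        apply Equiv.ext
        intro k
        apply emb_injective T hTc
        rw [show emb T hTc (toPerm _ hq k) = emb _ (toPermCard _ hq) (toPerm _ hq k) from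
          emb_congr himg.symm hTc (toPermCard _ hq) _]
        rw [emb_toPerm _ hq k]
        rfl
    · -- values agree
      congr 1
      funext k
      exact (emb_toPerm p ((Finset.mem_filter.mp hp).2) k).symm
  rw [step3, Finset.sum_product]
  rw [← Finset.sum_attach (Finset.powersetCard e (Finset.univ : Finset (Fin N)))
      (fun T => rdet A T * rdet B T)]
  refine Finset.sum_congr rfl fun T _ => ?_
  exact sum_perm A B T.1 (Finset.mem_powersetCard_univ.mp T.2)

lemma prod_emb (T : Finset (Fin N)) (hT : T.card = e) (w : Fin N → R) :
    ∏ k : Fin e, w (emb T hT k) = ∏ t ∈ T, w t := by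
  rw [← Finset.prod_coe_sort T w]
  exact Fintype.prod_equiv (T.orderIsoOfFin hT).toEquiv (fun k => w (emb T hT k))
    (fun t => w t.1) (fun k => rfl)

lemma rdet_diagonal_mul (w : Fin N → R) (B : Matrix (Fin N) (Fin e) R) (T : Finset (Fin N))
    (hT : T.card = e) :
    rdet (Matrix.diagonal w * B) T = (∏ t ∈ T, w t) * rdet B T := by
  rw [rdet_of_card _ T hT, rdet_of_card B T hT]
  have h : (Matrix.diagonal w * B).submatrix (emb T hT) id
      = Matrix.of fun k i => w (emb T hT k) * (B.submatrix (emb T hT) id) k i := by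
    ext k i
    simp [Matrix.diagonal_mul]
  rw [h, Matrix.det_mul_column, prod_emb T hT w]

/-- Weighted Cauchy–Binet. -/
theorem cauchy_binet_weighted (w : Fin N → R) (A B : Matrix (Fin N) (Fin e) R) :
    Matrix.det (Aᵀ * Matrix.diagonal w * B) =
      ∑ T ∈ Finset.powersetCard e (Finset.univ : Finset (Fin N)),
        (∏ t ∈ T, w t) * (rdet A T * rdet B T) := by
  rw [Matrix.mul_assoc, cauchy_binet A (Matrix.diagonal w * B)]
  refine Finset.sum_congr rfl fun T hT => ?_
  rw [rdet_diagonal_mul w B T (Finset.mem_powersetCard_univ.mp hT)]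
  ring

/-- the sign-weighted minor vectors -/
def cvec (X : Matrix (Fin N) (Fin (e + 1)) R) (i : Fin (e + 1)) (T : Finset (Fin N)) : R :=
  (-1 : R) ^ (i : ℕ) * rdet (X.submatrix id i.succAbove) T

theorem adjugate_weighted (w : Fin N → R) (X : Matrix (Fin N) (Fin (e + 1)) R)
    (i j : Fin (e + 1)) :
    Matrix.adjugate (Xᵀ * Matrix.diagonal w * X) i j =
      ∑ T ∈ Finset.powersetCard e (Finset.univ : Finset (Fin N)),
        (∏ t ∈ T, w t) * (cvec X i T * cvec X j T) := by
  rw [Matrix.adjugate_fin_succ_eq_det_submatrix]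
  have h : (Xᵀ * Matrix.diagonal w * X).submatrix j.succAbove i.succAbove
      = (X.submatrix id j.succAbove)ᵀ * Matrix.diagonal w * (X.submatrix id i.succAbove) := by
    ext a b
    simp only [Matrix.submatrix_apply, Matrix.mul_apply, Matrix.transpose_apply,
      Matrix.diagonal_apply, Matrix.submatrix_apply, id_eq]
  rw [h, cauchy_binet_weighted w (X.submatrix id j.succAbove) (X.submatrix id i.succAbove),
    Finset.mul_sum]
  refine Finset.sum_congr rfl fun T hT => ?_
  simp only [cvec]
  rw [pow_add]
  ring


variable {n : ℕ}

lemma prod_indicator (S T : Finset (Fin n)) :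
    (∏ t ∈ T, (if t ∈ S then (1 : ℝ) else 0)) = if T ⊆ S then 1 else 0 := by
  split_ifs with h
  · exact Finset.prod_eq_one fun t ht => if_pos (h ht)
  · obtain ⟨t, htT, htS⟩ := Finset.not_subset.mp h
    exact Finset.prod_eq_zero htT (if_neg htS)

lemma count_supersets {s e : ℕ} (T : Finset (Fin n)) (hT : T.card = e) (hes : e ≤ s) :
    ((Finset.powersetCard s (Finset.univ : Finset (Fin n))).filter (fun S => T ⊆ S)).card
      = (n - e).choose (s - e) := by
  classical
  have key : ((Finset.powersetCard s (Finset.univ : Finset (Fin n))).filter (fun S => T ⊆ S)).card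
      = (Finset.powersetCard (s - e) ((Finset.univ : Finset (Fin n)) \ T)).card := by
    refine Finset.card_bij' (fun S _ => S \ T) (fun S' _ => S' ∪ T) ?_ ?_ ?_ ?_
    · intro S hS
      obtain ⟨hS1, hS2⟩ := Finset.mem_filter.mp hS
      have hcard : S.card = s := (Finset.mem_powersetCard.mp hS1).2
      refine Finset.mem_powersetCard.mpr ⟨Finset.sdiff_subset_sdiff (Finset.subset_univ S)
        Finset.Subset.rfl, ?_⟩
      rw [Finset.card_sdiff_of_subset hS2, hcard, hT]
    · intro S' hS'
      obtain ⟨hsub, hcard⟩ := Finset.mem_powersetCard.mp hS'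
      have hdisj : Disjoint S' T := Finset.disjoint_left.mpr fun a ha =>
        (Finset.mem_sdiff.mp (hsub ha)).2
      refine Finset.mem_filter.mpr ⟨Finset.mem_powersetCard.mpr ⟨Finset.subset_univ _, ?_⟩,
        Finset.subset_union_right⟩
      rw [Finset.card_union_of_disjoint hdisj, hcard, hT]
      omega
    · intro S hS
      exact Finset.sdiff_union_of_subset (Finset.mem_filter.mp hS).2
    · intro S' hS'
      have hdisj : Disjoint S' T := Finset.disjoint_left.mpr fun a ha =>
        (Finset.mem_sdiff.mp ((Finset.mem_powersetCard.mp hS').1 ha)).2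
      show (S' ∪ T) \ T = S'
      rw [Finset.union_sdiff_distrib, Finset.sdiff_self, Finset.union_empty,
        Finset.sdiff_eq_self_of_disjoint hdisj]
  rw [key, Finset.card_powersetCard, Finset.card_sdiff_of_subset (Finset.subset_univ T),
    Finset.card_univ, Fintype.card_fin, hT]

end VSaux

namespace VSmain
open VSaux

variable {n e : ℕ}

/-- indicator weight of a subset -/
def ind (S : Finset (Fin n)) : Fin n → ℝ := fun i => if i ∈ S then (1 : ℝ) else 0

lemma gram_eq (X : Matrix (Fin n) (Fin d) ℝ) (S : Finset (Fin n)) :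
    gram X S = Xᵀ * Matrix.diagonal (ind S) * X := by
  ext a b
  have hL : (gram X S) a b = ∑ i ∈ S, X i a * X i b := by
    rw [_root_.gram, Matrix.mul_apply]
    rw [← Finset.sum_coe_sort S (fun i => X i a * X i b)]
    rfl
  have hR : (Xᵀ * Matrix.diagonal (ind S) * X) a b = ∑ i ∈ S, X i a * X i b := by
    rw [Matrix.mul_assoc, Matrix.mul_apply]
    simp only [Matrix.transpose_apply, Matrix.diagonal_mul, ind]
    rw [Finset.sum_congr rfl (fun i (_ : i ∈ Finset.univ) =>
      show X i a * ((if i ∈ S then (1:ℝ) else 0) * X i b)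
        = if i ∈ S then X i a * X i b else 0 by split_ifs <;> ring)]
    rw [Finset.sum_ite_mem, Finset.univ_inter]
  rw [hL, hR]

lemma adjugate_gram (X : Matrix (Fin n) (Fin (e + 1)) ℝ) (S : Finset (Fin n))
    (i j : Fin (e + 1)) :
    Matrix.adjugate (gram X S) i j =
      ∑ T ∈ Finset.powersetCard e (Finset.univ : Finset (Fin n)),
        (if T ⊆ S then (1 : ℝ) else 0) * (cvec X i T * cvec X j T) := by
  rw [gram_eq, adjugate_weighted]
  refine Finset.sum_congr rfl fun T _ => ?_
  rw [show (∏ t ∈ T, ind S t) = if T ⊆ S then (1:ℝ) else 0 from prod_indicator S T]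

lemma adjugate_XtX (X : Matrix (Fin n) (Fin (e + 1)) ℝ) (i j : Fin (e + 1)) :
    Matrix.adjugate (Xᵀ * X) i j =
      ∑ T ∈ Finset.powersetCard e (Finset.univ : Finset (Fin n)),
        cvec X i T * cvec X j T := by
  have h : Xᵀ * X = Xᵀ * Matrix.diagonal (fun _ : Fin n => (1:ℝ)) * X := by
    rw [Matrix.diagonal_one, Matrix.mul_one]
  rw [h, adjugate_weighted]
  simp

lemma adjugate_gram_posSemidef (X : Matrix (Fin n) (Fin (e + 1)) ℝ) (S : Finset (Fin n)) :
    (Matrix.adjugate (gram X S)).PosSemidef := by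
  rw [Matrix.posSemidef_iff_dotProduct_mulVec]
  constructor
  · ext i j
    rw [Matrix.conjTranspose_apply, star_trivial, adjugate_gram, adjugate_gram]
    exact Finset.sum_congr rfl fun T _ => by ring
  · intro x
    rw [star_trivial]
    have expand : x ⬝ᵥ (Matrix.adjugate (gram X S)) *ᵥ x
        = ∑ i, ∑ j, ∑ T ∈ Finset.powersetCard e (Finset.univ : Finset (Fin n)),
            x i * ((if T ⊆ S then (1:ℝ) else 0) * (cvec X i T * cvec X j T) * x j) := by
      simp only [dotProduct, Matrix.mulVec, dotProduct]
      refine Finset.sum_congr rfl fun i _ => ?_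
      rw [Finset.mul_sum]
      refine Finset.sum_congr rfl fun j _ => ?_
      rw [adjugate_gram, Finset.sum_mul, Finset.mul_sum]
    have hq : x ⬝ᵥ (Matrix.adjugate (gram X S)) *ᵥ x
        = ∑ T ∈ Finset.powersetCard e (Finset.univ : Finset (Fin n)),
            (if T ⊆ S then (1:ℝ) else 0) * (∑ i, x i * cvec X i T) ^ 2 := by
      rw [expand]
      rw [Finset.sum_congr rfl fun i (_ : i ∈ Finset.univ) => Finset.sum_comm]
      rw [Finset.sum_comm]
      refine Finset.sum_congr rfl fun T _ => ?_
      rw [sq, Finset.sum_mul_sum, Finset.mul_sum]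
      refine Finset.sum_congr rfl fun i _ => ?_
      rw [Finset.mul_sum]
      refine Finset.sum_congr rfl fun j _ => ?_
      ring
    rw [hq]
    refine Finset.sum_nonneg fun T _ => mul_nonneg (by split_ifs <;> norm_num) (sq_nonneg _)

lemma sum_adjugate_gram (X : Matrix (Fin n) (Fin (e + 1)) ℝ) {s : ℕ} (hes : e ≤ s) :
    ∑ S ∈ Finset.powersetCard s (Finset.univ : Finset (Fin n)),
        Matrix.adjugate (gram X S)
      = (((n - e).choose (s - e) : ℝ)) • Matrix.adjugate (Xᵀ * X) := by
  ext i j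
  rw [Matrix.sum_apply, Matrix.smul_apply, adjugate_XtX, Finset.smul_sum]
  rw [Finset.sum_congr rfl (fun S (_ : S ∈ Finset.powersetCard s
    (Finset.univ : Finset (Fin n))) => adjugate_gram X S i j)]
  rw [Finset.sum_comm]
  refine Finset.sum_congr rfl fun T hT => ?_
  rw [← Finset.sum_mul, smul_eq_mul]
  congr 1
  rw [Finset.sum_boole, count_supersets T (Finset.mem_powersetCard_univ.mp hT) hes]

lemma psd_smul {m : Type*} [Fintype m] {M : Matrix m m ℝ} (hM : M.PosSemidef) {c : ℝ}
    (hc : 0 ≤ c) : (c • M).PosSemidef := by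
  rw [Matrix.posSemidef_iff_dotProduct_mulVec]
  constructor
  · ext i j
    simp only [Matrix.conjTranspose_apply, Matrix.smul_apply, star_trivial, smul_eq_mul]
    have := congrFun (congrFun hM.1 i) j
    simp only [Matrix.conjTranspose_apply, star_trivial] at this
    rw [this]
  · intro x
    rw [Matrix.smul_mulVec, dotProduct_smul, smul_eq_mul]
    exact mul_nonneg hc (hM.dotProduct_mulVec_nonneg x)

lemma psd_sum {m ι : Type*} [Fintype m] (t : Finset ι) (f : ι → Matrix m m ℝ)
    (h : ∀ i ∈ t, (f i).PosSemidef) : (∑ i ∈ t, f i).PosSemidef :=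
  Finset.sum_induction f _ (fun _ _ ha hb => ha.add hb) Matrix.PosSemidef.zero h

lemma diff_psd (X : Matrix (Fin n) (Fin (e + 1)) ℝ) (S : Finset (Fin n)) :
    (Matrix.adjugate (gram X S) - (gram X S).det • (gram X S)⁻¹).PosSemidef := by
  by_cases hdet : IsUnit (gram X S).det
  · rw [Matrix.inv_def, Ring.inverse_eq_inv, smul_smul,
      mul_inv_cancel₀ (isUnit_iff_ne_zero.mp hdet), one_smul, sub_self]
    exact Matrix.PosSemidef.zero
  · rw [Matrix.nonsing_inv_apply_not_isUnit _ hdet, smul_zero, sub_zero]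
    exact adjugate_gram_posSemidef X S

end VSmain
/-- Second moment of volume sampling: under full support,
`E[(X_S^⊤X_S)^{−1}] = ((n−d+1)/(s−d+1)) (X^⊤X)^{−1}`; in general the
positive-semidefinite (Loewner) inequality `⪯` holds. -/
theorem volume_sampling_second_moment {n d : ℕ} (X : Matrix (Fin n) (Fin d) ℝ)
    (hrank : X.rank = d) (hdn : d ≤ n) (s : ℕ) (hds : d ≤ s) (hsn : s ≤ n) :
    ((∀ S ∈ Finset.powersetCard s (Finset.univ : Finset (Fin n)), 0 < (gram X S).det) →
      ∑ S ∈ Finset.powersetCard s (Finset.univ : Finset (Fin n)),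
          ((gram X S).det / (((n - d).choose (s - d) : ℝ) * (Xᵀ * X).det)) • (gram X S)⁻¹
        = ((((n : ℝ) - d + 1) / ((s : ℝ) - d + 1)) • (Xᵀ * X)⁻¹ : Matrix (Fin d) (Fin d) ℝ))
    ∧ (((((n : ℝ) - d + 1) / ((s : ℝ) - d + 1)) • (Xᵀ * X)⁻¹
        - ∑ S ∈ Finset.powersetCard s (Finset.univ : Finset (Fin n)),
            ((gram X S).det / (((n - d).choose (s - d) : ℝ) * (Xᵀ * X).det)) •
              (gram X S)⁻¹).PosSemidef) := by
  classical
  -- we may assume `d = e + 1`; the case `d = 0` is trivial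
  induction d with
  | zero =>
    constructor
    · intro _
      ext i j
      exact i.elim0
    · rw [Matrix.posSemidef_iff_dotProduct_mulVec]
      constructor
      · ext i j
        exact i.elim0
      · intro x
        simp [dotProduct, Matrix.mulVec]
  | succ e _ =>
    set D := (Xᵀ * X).det with hDdef
    have hDnn : 0 ≤ D := by
      rw [hDdef, VSaux.cauchy_binet X X]
      exact Finset.sum_nonneg fun T _ => mul_self_nonneg _
    have hD0 : D ≠ 0 := by
      intro h
      obtain ⟨v, hv0, hv⟩ := Matrix.exists_mulVec_eq_zero_iff.mpr h
      have hrk : (Xᵀ * X).rank = e + 1 := by rw [Matrix.rank_transpose_mul_self, hrank]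
      have hker : v ∈ LinearMap.ker (Xᵀ * X).mulVecLin := by
        rw [LinearMap.mem_ker, Matrix.mulVecLin_apply]
        exact hv
      have hrn := LinearMap.finrank_range_add_finrank_ker (Xᵀ * X).mulVecLin
      rw [Module.finrank_fintype_fun_eq_card, Fintype.card_fin] at hrn
      have hrank_eq : Module.finrank ℝ (LinearMap.range (Xᵀ * X).mulVecLin) = e + 1 := hrk
      have hker0 : Module.finrank ℝ (LinearMap.ker (Xᵀ * X).mulVecLin) = 0 := by omega
      rw [Submodule.finrank_eq_zero] at hker0
      rw [hker0] at hker
      exact hv0 (by simpa using hker)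
    have hD : 0 < D := lt_of_le_of_ne hDnn (Ne.symm hD0)
    have hCnat : 0 < (n - (e + 1)).choose (s - (e + 1)) := Nat.choose_pos (by omega)
    have hC : (0 : ℝ) < ((n - (e + 1)).choose (s - (e + 1)) : ℝ) := by exact_mod_cast hCnat
    set C : ℝ := ((n - (e + 1)).choose (s - (e + 1)) : ℝ) with hCdef
    set C' : ℝ := ((n - e).choose (s - e) : ℝ) with hC'def
    have hsd : (0 : ℝ) < (s : ℝ) - ((e + 1 : ℕ) : ℝ) + 1 := by
      have h1 : ((e + 1 : ℕ) : ℝ) ≤ (s : ℝ) := by exact_mod_cast hds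
      linarith
    have hkeynat : ((n - e).choose (s - e)) * (s - (e + 1) + 1)
        = ((n - (e + 1)).choose (s - (e + 1))) * (n - (e + 1) + 1) := by
      have h1 : n - e = (n - (e + 1)) + 1 := by omega
      have h2 : s - e = (s - (e + 1)) + 1 := by omega
      rw [h1, h2, ← Nat.add_one_mul_choose_eq]
      ring
    have hcastn : (n : ℝ) - ((e + 1 : ℕ) : ℝ) + 1 = ((n - (e + 1) + 1 : ℕ) : ℝ) := by
      push_cast [Nat.cast_sub hdn]
      ring
    have hcasts : (s : ℝ) - ((e + 1 : ℕ) : ℝ) + 1 = ((s - (e + 1) + 1 : ℕ) : ℝ) := by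
      push_cast [Nat.cast_sub hds]
      ring
    have hkey : C' * ((s : ℝ) - ((e + 1 : ℕ) : ℝ) + 1) = C * ((n : ℝ) - ((e + 1 : ℕ) : ℝ) + 1) := by
      rw [hcastn, hcasts, hCdef, hC'def]
      exact_mod_cast hkeynat
    have hmaster := VSmain.sum_adjugate_gram X (s := s) (Nat.le_of_succ_le hds)
    have hscal : ((n : ℝ) - ((e + 1 : ℕ) : ℝ) + 1) / ((s : ℝ) - ((e + 1 : ℕ) : ℝ) + 1) * D⁻¹
        = (C * D)⁻¹ * C' := by
      have hbD : ((s : ℝ) - ((e + 1 : ℕ) : ℝ) + 1) * D ≠ 0 := mul_ne_zero hsd.ne' hD0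
      have hCD : C * D ≠ 0 := mul_ne_zero hC.ne' hD0
      rw [division_def, mul_assoc, ← mul_inv, ← division_def, mul_comm (C * D)⁻¹ C',
        ← division_def, div_eq_div_iff hbD hCD]
      linear_combination (-D) * hkey
    have hRHS : ((((n : ℝ) - ((e + 1 : ℕ) : ℝ)) + 1) / (((s : ℝ) - ((e + 1 : ℕ) : ℝ)) + 1)) •
          (Xᵀ * X)⁻¹
        = (C * D)⁻¹ • ∑ S ∈ Finset.powersetCard s (Finset.univ : Finset (Fin n)),
            Matrix.adjugate (gram X S) := by
      rw [hmaster, Matrix.inv_def, Ring.inverse_eq_inv, ← hDdef, smul_smul, smul_smul]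
      rw [hscal]
    have hLHSgen : ∀ S ∈ Finset.powersetCard s (Finset.univ : Finset (Fin n)),
        ((gram X S).det / (C * D)) • (gram X S)⁻¹
          = (C * D)⁻¹ • ((gram X S).det • (gram X S)⁻¹) := by
      intro S _
      rw [smul_smul, div_eq_mul_inv, mul_comm]
    constructor
    · intro hfull
      have hterm : ∀ S ∈ Finset.powersetCard s (Finset.univ : Finset (Fin n)),
          ((gram X S).det / (C * D)) • (gram X S)⁻¹
            = (C * D)⁻¹ • Matrix.adjugate (gram X S) := by
        intro S hS
        rw [hLHSgen S hS, Matrix.inv_def, Ring.inverse_eq_inv,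
          smul_smul ((gram X S).det) ((gram X S).det⁻¹),
          mul_inv_cancel₀ (hfull S hS).ne', one_smul]
      rw [Finset.sum_congr rfl hterm, ← Finset.smul_sum, hRHS]
    · have hdiff : ((((n : ℝ) - ((e + 1 : ℕ) : ℝ)) + 1) / (((s : ℝ) - ((e + 1 : ℕ) : ℝ)) + 1)) •
            (Xᵀ * X)⁻¹
          - ∑ S ∈ Finset.powersetCard s (Finset.univ : Finset (Fin n)),
              ((gram X S).det / (C * D)) • (gram X S)⁻¹
          = (C * D)⁻¹ • ∑ S ∈ Finset.powersetCard s (Finset.univ : Finset (Fin n)),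
              (Matrix.adjugate (gram X S) - (gram X S).det • (gram X S)⁻¹) := by
        rw [hRHS, Finset.sum_congr rfl hLHSgen, ← Finset.smul_sum, ← smul_sub,
          ← Finset.sum_sub_distrib]
      rw [hdiff]
      have hcd : (0 : ℝ) ≤ (C * D)⁻¹ := by positivity
      exact VSmain.psd_smul (VSmain.psd_sum _ _ fun S _ => VSmain.diff_psd X S) hcd
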